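/- Let I be a finite index set and let ψ, φ : I → ℂ satisfy Σ_x |ψ(x)|² = 1 and Σ_x |φ(x)|² = 1. Set p(x) = |ψ(x)|² and q(x) = |φ(x)|², and define F(x) = conj(φ(x))·ψ(x)/p(x) if p(x) ≥ q(x) and F(x) = 0 otherwise, and G(x) = conj(φ(x))·ψ(x)/q(x) if p(x) < q(x) and G(x) = 0 otherwise (with the convention 0/0 = 0). Then Σ_x conj(φ(x))·ψ(x) = Σ_x p(x)·F(x) + Σ_x q(x)·G(x), and moreover |F(x)| ≤ 1 and |G(x)| ≤ 1 for every x ∈ I. -/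

import Mathlib

/-- Overlap decomposition for sampling-based estimation of ⟨φ|ψ⟩ (paper's Lemma 4). -/
theorem overlap_decomposition {I : Type*} [Fintype I]
    (ψ φ : I → ℂ)
    (hψ : ∑ x, ‖ψ x‖ ^ 2 = 1)
    (hφ : ∑ x, ‖φ x‖ ^ 2 = 1)
    (p q : I → ℝ)
    (hp : ∀ x, p x = ‖ψ x‖ ^ 2)
    (hq : ∀ x, q x = ‖φ x‖ ^ 2)
    (F G : I → ℂ)
    (hF : ∀ x, F x = if q x ≤ p x then (starRingEnd ℂ) (φ x) * ψ x / (p x : ℂ) else 0)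
    (hG : ∀ x, G x = if p x < q x then (starRingEnd ℂ) (φ x) * ψ x / (q x : ℂ) else 0) :
    (∑ x, (starRingEnd ℂ) (φ x) * ψ x)
      = ∑ x, (p x : ℂ) * F x + ∑ x, (q x : ℂ) * G x
    ∧ (∀ x, ‖F x‖ ≤ 1) ∧ (∀ x, ‖G x‖ ≤ 1) := by
  refine ⟨?_, ?_, ?_⟩
  · rw [← Finset.sum_add_distrib]
    apply Finset.sum_congr rfl
    intro x _
    rw [hF x, hG x]
    by_cases h : q x ≤ p x
    · simp only [h, if_pos, not_lt.2 h, if_neg, mul_zero, add_zero, if_false]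
      by_cases hp0 : p x = 0
      · have hψ0 : ψ x = 0 := by
          have := hp x
          rw [hp0] at this
          have := (pow_eq_zero_iff (n := 2) (by norm_num)).mp this.symm
          exact norm_eq_zero.mp this
        simp [hψ0, hp0]
      · rw [← mul_div_assoc, mul_div_cancel_left₀ _ (Complex.ofReal_ne_zero.mpr hp0)]
    · rw [if_neg h, if_pos (lt_of_not_ge h), mul_zero, zero_add]
      have hq0 : q x ≠ 0 := by
        have : 0 ≤ p x := by rw [hp x]; positivity
        intro h0; exact h (h0 ▸ this)
      rw [← mul_div_assoc, mul_div_cancel_left₀ _ (Complex.ofReal_ne_zero.mpr hq0)]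
  · intro x
    rw [hF x]
    by_cases h : q x ≤ p x
    · rw [if_pos h]
      by_cases hp0 : p x = 0
      · simp [hp0]
      · have hppos : 0 < p x := lt_of_le_of_ne (by rw [hp x]; positivity) (Ne.symm hp0)
        rw [norm_div, norm_mul]
        have : ‖(p x : ℂ)‖ = p x := by
          rw [Complex.norm_real, Real.norm_eq_abs, abs_of_pos hppos]
        rw [this, div_le_one hppos, Complex.norm_conj]
        have h1 : ‖φ x‖ ≤ ‖ψ x‖ := by
          have := h
          rw [hp x, hq x] at this
          exact (pow_le_pow_iff_left₀ (by positivity) (by positivity) (by norm_num)).mp this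
        calc ‖φ x‖ * ‖ψ x‖
            ≤ ‖ψ x‖ * ‖ψ x‖ :=
              mul_le_mul_of_nonneg_right h1 (by positivity)
          _ = p x := by rw [hp x]; ring
    · simp [if_neg h]
  · intro x
    rw [hG x]
    by_cases h : p x < q x
    · rw [if_pos h]
      have hqpos : 0 < q x := lt_of_le_of_lt (by rw [hp x]; positivity) h
      rw [norm_div, norm_mul]
      have : ‖(q x : ℂ)‖ = q x := by
        rw [Complex.norm_real, Real.norm_eq_abs, abs_of_pos hqpos]
      rw [this, div_le_one hqpos, Complex.norm_conj]
      have h1 : ‖ψ x‖ ≤ ‖φ x‖ := by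
        have := h.le
        rw [hp x, hq x] at this
        exact (pow_le_pow_iff_left₀ (by positivity) (by positivity) (by norm_num)).mp this
      calc ‖φ x‖ * ‖ψ x‖
          ≤ ‖φ x‖ * ‖φ x‖ :=
            mul_le_mul_of_nonneg_left h1 (by positivity)
        _ = q x := by rw [hq x]; ring
    · simp [if_neg h]
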